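/- If A is an n×n complex P-matrix (all principal minors have positive real part equal to their value, i.e., all principal minors are positive reals), then A is invertible and A⁻¹ is also a P-matrix. -/

import Mathlib

open Matrix
set_option maxHeartbeats 1000000

/-- A complex matrix is a P-matrix if every principal minor is a positive real
number. -/
def IsPMatrix {ι : Type*} [Fintype ι] [DecidableEq ι] (A : Matrix ι ι ℂ) : Prop :=
  ∀ α : Finset ι, α.Nonempty →
    ∃ r : ℝ, 0 < r ∧
      (A.submatrix (fun i : {x // x ∈ α} => (i : ι))
        (fun i : {x // x ∈ α} => (i : ι))).det = (r : ℂ)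

/-- Jacobi's identity for block matrices: the determinant of the (1,1) block of
the inverse times the determinant equals the determinant of the (2,2) block. -/
lemma jacobi_aux {m l : Type*} [Fintype m] [DecidableEq m] [Fintype l] [DecidableEq l]
    (P : Matrix m m ℂ) (B : Matrix m l ℂ) (C : Matrix l m ℂ) (D : Matrix l l ℂ)
    [Invertible D] [Invertible (fromBlocks P B C D)] :
    ((fromBlocks P B C D)⁻¹.toBlocks₁₁).det * (fromBlocks P B C D).det = D.det := by
  letI iS : Invertible (P - B * ⅟ D * C) := invertibleOfFromBlocks₂₂Invertible P B C D
  rw [← invOf_eq_nonsing_inv, invOf_fromBlocks₂₂_eq]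
  have h1 : (⅟ (P - B * ⅟ D * C)).det * (P - B * ⅟ D * C).det = 1 := by
    rw [← det_mul, invOf_mul_self, det_one]
  have h2 : (fromBlocks (⅟ (P - B * ⅟ D * C)) (-(⅟ (P - B * ⅟ D * C) * B * ⅟ D))
      (-(⅟ D * C * ⅟ (P - B * ⅟ D * C))) (⅟ D + ⅟ D * C * ⅟ (P - B * ⅟ D * C) * B * ⅟ D)).toBlocks₁₁
      = ⅟ (P - B * ⅟ D * C) := rfl
  rw [h2, det_fromBlocks₂₂, mul_left_comm, h1, mul_one]

/-- a complex P-matrix is invertible and its inverse is a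
P-matrix. -/
theorem stmt_11 {n : ℕ} (A : Matrix (Fin n) (Fin n) ℂ) (hA : IsPMatrix A) :
    IsUnit A.det ∧ IsPMatrix A⁻¹ := by
  -- the full determinant
  have hfull : ∃ r : ℝ, 0 < r ∧ A.det = (r : ℂ) := by
    rcases isEmpty_or_nonempty (Fin n) with h | h
    · exact ⟨1, one_pos, by simp [Matrix.det_isEmpty]⟩
    · obtain ⟨i⟩ := h
      obtain ⟨r, hr, hd⟩ := hA Finset.univ ⟨i, Finset.mem_univ i⟩
      refine ⟨r, hr, ?_⟩
      rw [← hd]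
      have h := (Matrix.det_submatrix_equiv_self
        (Equiv.subtypeUnivEquiv (fun x : Fin n => Finset.mem_univ x)) A).symm
      convert h using 2
      rfl
  obtain ⟨r, hr, hdet⟩ := hfull
  have hAdet : IsUnit A.det := by
    rw [hdet]
    exact isUnit_iff_ne_zero.mpr (by exact_mod_cast hr.ne')
  refine ⟨hAdet, ?_⟩
  intro α hα
  -- determinant of the complementary principal submatrix
  have hcompl : ∃ s : ℝ, 0 < s ∧
      (A.submatrix (fun i : {x // x ∈ αᶜ} => (i : Fin n))
        (fun i : {x // x ∈ αᶜ} => (i : Fin n))).det = (s : ℂ) := by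
    rcases (αᶜ).eq_empty_or_nonempty with h | h
    · haveI : IsEmpty {x // x ∈ αᶜ} := by
        rw [h]; exact ⟨fun x => (Finset.notMem_empty _ x.2)⟩
      exact ⟨1, one_pos, by simp [Matrix.det_isEmpty]⟩
    · exact hA αᶜ h
  obtain ⟨s, hs, hscompl⟩ := hcompl
  -- reindex `A` as a block matrix along `α` and `αᶜ`
  set e : {x // x ∈ α} ⊕ {x // x ∈ αᶜ} ≃ Fin n :=
    (Equiv.sumCongr (Equiv.refl _)
      (Equiv.subtypeEquivRight (p := (· ∈ αᶜ)) (q := (· ∉ α))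
        (fun x => Finset.mem_compl))).trans
      (Equiv.sumCompl (· ∈ α)) with he
  set M : Matrix _ _ ℂ := A.submatrix e e with hM
  have hMdet : M.det = A.det := Matrix.det_submatrix_equiv_self e A
  have h22 : M.toBlocks₂₂ = A.submatrix (fun i : {x // x ∈ αᶜ} => (i : Fin n))
      (fun i : {x // x ∈ αᶜ} => (i : Fin n)) := rfl
  haveI iD : Invertible M.toBlocks₂₂ := by
    apply Matrix.invertibleOfIsUnitDet
    rw [h22, hscompl]
    exact isUnit_iff_ne_zero.mpr (by exact_mod_cast hs.ne')
  haveI iM : Invertible M := by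
    apply Matrix.invertibleOfIsUnitDet
    rw [hMdet]; exact hAdet
  haveI : Invertible (fromBlocks M.toBlocks₁₁ M.toBlocks₁₂ M.toBlocks₂₁ M.toBlocks₂₂) :=
    iM.copy _ (Matrix.fromBlocks_toBlocks M)
  have key := jacobi_aux M.toBlocks₁₁ M.toBlocks₁₂ M.toBlocks₂₁ M.toBlocks₂₂
  rw [Matrix.fromBlocks_toBlocks] at key
  -- identify the (1,1) block of `M⁻¹`
  have hinv : (M⁻¹).toBlocks₁₁ = A⁻¹.submatrix (fun i : {x // x ∈ α} => (i : Fin n))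
      (fun i : {x // x ∈ α} => (i : Fin n)) := by
    rw [hM, Matrix.inv_submatrix_equiv]
    rfl
  rw [hinv, h22, hMdet, hdet, hscompl] at key
  refine ⟨s / r, div_pos hs hr, ?_⟩
  have hr0 : (r : ℂ) ≠ 0 := by exact_mod_cast hr.ne'
  field_simp at key ⊢
  rw [Complex.ofReal_div, eq_div_iff hr0, key]
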